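/- Let n ≥ 3 be an integer and let T be a finite tree (a finite connected acyclic simple graph) in which every vertex has valence at most n. Then every prime number p dividing the order of the automorphism group of T satisfies p ≤ n. -/

import Mathlib

theorem tree_aut_prime_le (n : ℕ) (hn : 3 ≤ n) {V : Type*} [Fintype V]
    (G : SimpleGraph V) [DecidableRel G.Adj] (hT : G.IsTree)
    (hdeg : ∀ v : V, G.degree v ≤ n) {p : ℕ} (hp : p.Prime)
    (hdvd : p ∣ Nat.card (G ≃g G)) : p ≤ n := by
  classical
  by_contra hlt
  push_neg at hlt   -- n < p
  haveI : Fact p.Prime := ⟨hp⟩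
  set H : Subgroup (Equiv.Perm V) :=
    { carrier := {π | ∀ a b : V, G.Adj (π a) (π b) ↔ G.Adj a b}
      mul_mem' := by
        intro π τ hπ hτ a b
        simp only [Set.mem_setOf_eq] at *
        rw [Equiv.Perm.mul_apply, Equiv.Perm.mul_apply, hπ, hτ]
      one_mem' := by intro a b; simp
      inv_mem' := by
        intro π hπ a b
        simp only [Set.mem_setOf_eq] at *
        conv_rhs => rw [show a = π (π⁻¹ a) by simp, show b = π (π⁻¹ b) by simp]
        rw [hπ] } with hH
  have hcard : Nat.card (G ≃g G) = Nat.card H := by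
    refine Nat.card_congr ⟨fun φ => ⟨φ.toEquiv, fun a b => φ.map_rel_iff⟩,
      fun π => ⟨π.1, @fun a b => π.2 a b⟩, fun φ => rfl, fun π => rfl⟩
  rw [hcard] at hdvd
  obtain ⟨σ, hσ⟩ := exists_prime_orderOf_dvd_card' p hdvd
  set π : Equiv.Perm V := σ.1 with hπdef
  have hπadj : ∀ a b : V, G.Adj (π a) (π b) ↔ G.Adj a b := σ.2
  have hπord : orderOf π = p := by
    rw [← hσ]
    exact (orderOf_injective H.subtype H.subtype_injective σ).symm ▸ rfl
  have hπp : π ^ p = 1 := by rw [← hπord]; exact pow_orderOf_eq_one π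
  have hppos : 1 < p := hp.one_lt
  -- iterates fix a point fixed by a power
  have hiter : ∀ (τ : Equiv.Perm V) (v : V), τ v = v → ∀ j : ℕ, (τ ^ j) v = v := by
    intro τ v hv j
    induction j with
    | zero => simp
    | succ j ih => rw [pow_succ, Equiv.Perm.mul_apply, hv, ih]
  -- key: a point moved by π is moved by all π^m with p ∤ m
  have key : ∀ v : V, π v ≠ v → ∀ m : ℕ, (π ^ m) v = v → p ∣ m := by
    intro v hv m hm
    by_contra hns
    have hcop : Nat.Coprime m p := ((Nat.Prime.coprime_iff_not_dvd hp).mpr hns).symm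
    obtain ⟨a, -, ha⟩ := Nat.exists_mul_mod_eq_one_of_coprime hcop hppos
    have h1 : (π ^ (m * a)) v = v := by
      rw [pow_mul]; exact hiter _ _ hm a
    rw [← pow_mod_orderOf, hπord, ha, pow_one] at h1
    exact hv h1
  have hp2 : p ≠ 2 := by omega
  -- there exists a vertex fixed by π
  have hfix : ∃ u : V, π u = u := by
    by_contra hno
    push_neg at hno
    set φ : G ≃g G := RelIso.mk π (fun {a b} => hπadj a b) with hφ
    set πE : Equiv.Perm G.edgeSet := (φ.mapEdgeSet : G.edgeSet ≃ G.edgeSet) with hπE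
    have hval : ∀ e : G.edgeSet, (πE e).1 = Sym2.map π e.1 := fun e => rfl
    have hvalk : ∀ (k : ℕ) (e : G.edgeSet), ((πE ^ k) e).1 = Sym2.map (⇑(π ^ k)) e.1 := by
      intro k
      induction k with
      | zero => intro e; simp [Sym2.map_id]
      | succ k ih =>
        intro e
        rw [pow_succ, Equiv.Perm.mul_apply, ih, hval, Sym2.map_map,
          ← Equiv.Perm.coe_mul, ← pow_succ]
    have hπEp : πE ^ p = 1 := by
      apply Equiv.ext
      intro e
      apply Subtype.ext
      rw [hvalk, hπp]
      simp [Sym2.map_id]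
    have hpgE : IsPGroup p (Subgroup.zpowers πE) := by
      rcases hp.eq_one_or_self_of_dvd _ (orderOf_dvd_of_pow_eq_one hπEp) with h | h
      · exact IsPGroup.of_card (n := 0) (by rw [Nat.card_zpowers, h, pow_zero])
      · exact IsPGroup.of_card (n := 1) (by rw [Nat.card_zpowers, h, pow_one])
    have hpgV : IsPGroup p (Subgroup.zpowers π) :=
      IsPGroup.of_card (n := 1) (by rw [Nat.card_zpowers, hπord, pow_one])
    have hEempty : IsEmpty (MulAction.fixedPoints (Subgroup.zpowers πE) G.edgeSet) := by
      constructor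
      rintro ⟨e, hfixe⟩
      have h1 : πE e = e := hfixe ⟨πE, Subgroup.mem_zpowers _⟩
      have h2 : Sym2.map π e.1 = e.1 := by rw [← hval, h1]
      obtain ⟨e, he⟩ := e
      induction e with
      | _ a b =>
        simp only [Sym2.map_pair_eq, Sym2.eq_iff] at h2
        rcases h2 with ⟨h2a, h2b⟩ | ⟨h2a, h2b⟩
        · exact hno a h2a
        · have h3 : (π ^ 2) a = a := by
            rw [pow_two, Equiv.Perm.mul_apply, h2a, h2b]
          have := Nat.le_of_dvd (by norm_num) (key a (hno a) 2 h3)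
          omega
    have hVempty : IsEmpty (MulAction.fixedPoints (Subgroup.zpowers π) V) := by
      constructor
      rintro ⟨v, hfixv⟩
      exact hno v (hfixv ⟨π, Subgroup.mem_zpowers _⟩)
    have hmodV := hpgV.card_modEq_card_fixedPoints V
    have hmodE := hpgE.card_modEq_card_fixedPoints G.edgeSet
    have hv0 : Nat.card (MulAction.fixedPoints (Subgroup.zpowers π) V) = 0 :=
      @Nat.card_of_isEmpty _ hVempty
    have he0 : Nat.card (MulAction.fixedPoints (Subgroup.zpowers πE) G.edgeSet) = 0 :=
      @Nat.card_of_isEmpty _ hEempty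
    rw [hv0] at hmodV
    rw [he0] at hmodE
    have hdV : p ∣ Nat.card V := (Nat.modEq_zero_iff_dvd).mp hmodV
    have hdE : p ∣ Nat.card G.edgeSet := (Nat.modEq_zero_iff_dvd).mp hmodE
    have htree := hT.card_edgeFinset
    rw [Nat.card_eq_fintype_card] at hdV hdE
    rw [← Set.toFinset_card] at hdE
    have h1 : (p : ℕ) ∣ 1 := by
      have := Nat.dvd_sub hdV hdE
      rw [show Fintype.card V - G.edgeSet.toFinset.card = 1 by
        have hE : G.edgeSet.toFinset.card = G.edgeFinset.card := by
          rw [Set.toFinset_card, SimpleGraph.edgeFinset_card]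
        omega] at this
      exact this
    have := Nat.le_of_dvd one_pos h1
    omega
  obtain ⟨u, hu⟩ := hfix
  have hπne : π ≠ 1 := by
    intro h
    rw [h, orderOf_one] at hπord
    omega
  have hconn : G.Connected := hT.isConnected
  have hS : (Finset.univ.filter fun v : V => π v ≠ v).Nonempty := by
    by_contra h
    rw [Finset.not_nonempty_iff_eq_empty, Finset.filter_eq_empty_iff] at h
    apply hπne
    apply Equiv.ext
    intro x
    have := h (Finset.mem_univ x)
    simpa using this
  obtain ⟨v, hvmem, hvmin⟩ := Finset.exists_min_image _ (fun v => G.dist u v) hS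
  rw [Finset.mem_filter] at hvmem
  have hv : π v ≠ v := hvmem.2
  have hvu : v ≠ u := fun h => hv (by rw [h, hu])
  obtain ⟨W, hW⟩ := hconn.exists_walk_length_eq_dist u v
  obtain ⟨w, hadj, q, hq⟩ := SimpleGraph.Walk.exists_eq_cons_of_ne hvu W.reverse
  have hlen : G.dist u v = q.length + 1 := by
    rw [← hW, ← SimpleGraph.Walk.length_reverse W, hq, SimpleGraph.Walk.length_cons]
  have hdw : G.dist u w ≤ q.length := by
    have := SimpleGraph.dist_le q.reverse
    rwa [SimpleGraph.Walk.length_reverse] at this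
  have hπw : π w = w := by
    by_contra hw
    have := hvmin w (Finset.mem_filter.mpr ⟨Finset.mem_univ w, hw⟩)
    omega
  have hadjk : ∀ (k : ℕ) (a b : V), G.Adj ((π ^ k) a) ((π ^ k) b) ↔ G.Adj a b := by
    intro k
    induction k with
    | zero => intro a b; simp
    | succ k ih =>
      intro a b
      rw [pow_succ, Equiv.Perm.mul_apply, Equiv.Perm.mul_apply, ih, hπadj]
  have hadjwk : ∀ k : ℕ, G.Adj w ((π ^ k) v) := by
    intro k
    have h1 : G.Adj ((π ^ k) w) ((π ^ k) v) := (hadjk k w v).mpr hadj.symm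
    rwa [hiter π w hπw k] at h1
  have hinj : Function.Injective (fun k : Fin p =>
      (⟨(π ^ (k : ℕ)) v, hadjwk k⟩ : G.neighborSet w)) := by
    intro k1 k2 h
    simp only [Subtype.mk.injEq, Subtype.ext_iff] at h
    have h1 : (π ^ ((p - (k2 : ℕ)) + (k1 : ℕ))) v = v := by
      rw [pow_add, Equiv.Perm.mul_apply, h, ← Equiv.Perm.mul_apply, ← pow_add,
        Nat.sub_add_cancel (le_of_lt k2.2), hπp]
      rfl
    obtain ⟨c, hc⟩ := key v hv _ h1
    have hk1 : (k1 : ℕ) < p := k1.2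
    have hk2 : (k2 : ℕ) < p := k2.2
    have : (k1 : ℕ) = (k2 : ℕ) := by
      rcases Nat.lt_or_ge c 2 with h' | h'
      · interval_cases c
        · simp at hc; omega
        · rw [mul_one] at hc; omega
      · have h2 : p * 2 ≤ p * c := Nat.mul_le_mul_left p h'
        omega
    exact Fin.ext this
  have hple : p ≤ G.degree w := by
    rw [← SimpleGraph.card_neighborSet_eq_degree]
    calc p = Fintype.card (Fin p) := (Fintype.card_fin p).symm
      _ ≤ Fintype.card (G.neighborSet w) := Fintype.card_le_of_injective _ hinj
  have := hdeg w
  omega
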